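/- Let f satisfy |f(s)| ≤ A₂|s|^{2*−1} and let w satisfy 0 ≤ w(x) ≤ A₅(1+|x|)^{−(N−2)}. With w₀, w_y the rescaled translates as above, the interaction term ε_λ^R := ∫_{ℝ^N} f(w₀) w_y dx satisfies ε_λ^R ≤ C R^{−(N−2)} for a constant C independent of y ∈ ∂B₂(y₀), λ ∈ [0,1], and R ≥ 1. -/

import Mathlib

set_option maxHeartbeats 1000000

open MeasureTheory Real Filter
open scoped Topology

lemma rpow_neg_anti' {x y c : ℝ} (hx : 0 < x) (hxy : x ≤ y) (hc : 0 ≤ c) :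
    y ^ (-c) ≤ x ^ (-c) :=
  Real.rpow_le_rpow_of_nonpos hx hxy (neg_nonpos.mpr hc)

lemma key_split' {a b A B R : ℝ} (hab : b = a - 4) (hb : 0 ≤ b)
    (hA : 1 ≤ A) (hB : 1 ≤ B) (hR : 1 ≤ R) (hsum : 2 + 2 * R ≤ A + B) :
    A ^ (-a) * B ^ (-b) ≤ R ^ (-b) * (A ^ (-a) + B ^ (-a)) := by
  have hA0 : (0:ℝ) < A := lt_of_lt_of_le one_pos hA
  have hB0 : (0:ℝ) < B := lt_of_lt_of_le one_pos hB
  have hR0 : (0:ℝ) < R := lt_of_lt_of_le one_pos hR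
  have ha : 0 ≤ a := by linarith
  rcases le_or_gt R B with hRB | hBR
  · have h1 : B ^ (-b) ≤ R ^ (-b) := rpow_neg_anti' hR0 hRB hb
    have h2 : A ^ (-a) * B ^ (-b) ≤ A ^ (-a) * R ^ (-b) :=
      mul_le_mul_of_nonneg_left h1 (rpow_nonneg hA0.le _)
    nlinarith [rpow_nonneg hA0.le (-a), rpow_nonneg hR0.le (-b), rpow_nonneg hB0.le (-a)]
  · have hRA : R ≤ A := by linarith
    have h1 : A ^ (-a) ≤ R ^ (-a) := rpow_neg_anti' hR0 hRA ha
    have h2 : B ^ (-b) = B ^ (-a) * B ^ (4:ℝ) := by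
      rw [← Real.rpow_add hB0]; congr 1; linarith
    have h3 : B ^ (4:ℝ) ≤ R ^ (4:ℝ) :=
      Real.rpow_le_rpow hB0.le hBR.le (by norm_num)
    have h4 : R ^ (-a) * R ^ (4:ℝ) = R ^ (-b) := by
      rw [← Real.rpow_add hR0]; congr 1; linarith
    have h5 : A ^ (-a) * B ^ (-b) ≤ R ^ (-a) * (B ^ (-a) * R ^ (4:ℝ)) := by
      rw [h2]
      have hBa : (0:ℝ) ≤ B ^ (-a) := rpow_nonneg hB0.le _
      have := mul_le_mul h1 (mul_le_mul_of_nonneg_left h3 hBa)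
        (by positivity) (rpow_nonneg hR0.le _)
      linarith
    calc A ^ (-a) * B ^ (-b) ≤ R ^ (-a) * (B ^ (-a) * R ^ (4:ℝ)) := h5
      _ = R ^ (-b) * B ^ (-a) := by rw [← h4]; ring
      _ ≤ R ^ (-b) * (A ^ (-a) + B ^ (-a)) := by
          nlinarith [rpow_nonneg hA0.le (-a), rpow_nonneg hR0.le (-b)]

theorem stmt8 (N : ℕ) (hN : 3 ≤ N) (p : ℝ) (hp : p = 2 * N / ((N : ℝ) - 2))
    (A₂ A₅ : ℝ) (hA₂ : 0 < A₂) (hA₅ : 0 < A₅)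
    (f : ℝ → ℝ) (hf : ∀ s : ℝ, |f s| ≤ A₂ * |s| ^ (p - 1))
    (w : EuclideanSpace ℝ (Fin N) → ℝ)
    (hw : ∀ x, 0 ≤ w x ∧ w x ≤ A₅ * (1 + ‖x‖) ^ (-((N : ℝ) - 2)))
    (y₀ : EuclideanSpace ℝ (Fin N)) (hy₀ : ‖y₀‖ = 1) :
    ∃ C > 0, ∀ R : ℝ, 1 ≤ R → ∀ y : EuclideanSpace ℝ (Fin N), ‖y - y₀‖ = 2 →
      ∀ l : ℝ, 0 ≤ l → l ≤ 1 →
        ∫ x, f (if l = 0 then 0 else w (l⁻¹ • (x - R • y₀)))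
              * (if l = 1 then 0 else w ((1 - l)⁻¹ • (x - R • y)))
          ≤ C * R ^ (-((N : ℝ) - 2)) := by
  have hN3 : (3:ℝ) ≤ (N:ℝ) := by exact_mod_cast hN
  have hb0 : (0:ℝ) < (N:ℝ) - 2 := by linarith
  set b : ℝ := (N:ℝ) - 2 with hbdef
  set a : ℝ := (N:ℝ) + 2 with hadef
  have hab : b = a - 4 := by simp only [hbdef, hadef]; ring
  have hp1 : p - 1 = a / b := by
    rw [hp]; simp only [hbdef, hadef]
    have hne : (N:ℝ) - 2 ≠ 0 := by linarith
    rw [eq_div_iff hne, sub_mul, div_mul_cancel₀ _ hne]; ring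
  have hp1pos : 0 < p - 1 := by rw [hp1]; positivity
  have hint : Integrable (fun x : EuclideanSpace ℝ (Fin N) => (1 + ‖x‖) ^ (-a)) := by
    have hfr : (↑(Module.finrank ℝ (EuclideanSpace ℝ (Fin N))) : ℝ) < a := by
      rw [finrank_euclideanSpace_fin]
      simp only [hadef]; linarith
    exact integrable_one_add_norm hfr
  set C₁ : ℝ := ∫ x : EuclideanSpace ℝ (Fin N), (1 + ‖x‖) ^ (-a) with hC₁def
  have hC₁0 : 0 ≤ C₁ := integral_nonneg fun x => rpow_nonneg (by positivity) _
  set K : ℝ := A₂ * A₅ ^ (p - 1) * A₅ with hKdef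
  have hK0 : 0 < K := by
    have := Real.rpow_pos_of_pos hA₅ (p - 1); positivity
  have hC0 : (0:ℝ) < 2 * K * C₁ + 1 := by nlinarith
  refine ⟨2 * K * C₁ + 1, hC0, ?_⟩
  intro R hR y hy l hl0 hl1
  have hR0 : (0:ℝ) < R := lt_of_lt_of_le one_pos hR
  have hRb : (0:ℝ) < R ^ (-b) := Real.rpow_pos_of_pos hR0 _
  have hCR0 : (0:ℝ) ≤ (2 * K * C₁ + 1) * R ^ (-b) := mul_nonneg hC0.le hRb.le
  have hf0 : f 0 = 0 := by
    have h := hf 0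
    rw [abs_zero, Real.zero_rpow hp1pos.ne', mul_zero] at h
    exact abs_nonpos_iff.mp h
  rcases eq_or_lt_of_le hl0 with hl0' | hl0'
  · rw [← hl0']
    simpa [hf0] using hCR0
  rcases eq_or_lt_of_le hl1 with hl1' | hl1'
  · rw [hl1']
    simpa using hCR0
  simp only [if_neg (ne_of_gt hl0'), if_neg (ne_of_lt hl1')]
  set h : EuclideanSpace ℝ (Fin N) → ℝ :=
    fun x => f (w (l⁻¹ • (x - R • y₀))) * w ((1 - l)⁻¹ • (x - R • y)) with hhdef
  set g : EuclideanSpace ℝ (Fin N) → ℝ :=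
    fun x => K * (R ^ (-b) * ((1 + ‖x - R • y₀‖) ^ (-a) + (1 + ‖x - R • y‖) ^ (-a))) with hgdef
  have hg_int : Integrable g := by
    apply Integrable.const_mul
    apply Integrable.const_mul
    exact (hint.comp_sub_right (R • y₀)).add (hint.comp_sub_right (R • y))
  have hbound : ∀ x, |h x| ≤ g x := by
    intro x
    set A : ℝ := 1 + ‖x - R • y₀‖ with hAdef
    set B : ℝ := 1 + ‖x - R • y‖ with hBdef
    have hA1 : 1 ≤ A := by simp only [hAdef]; nlinarith [norm_nonneg (x - R • y₀)]
    have hB1 : 1 ≤ B := by simp only [hBdef]; nlinarith [norm_nonneg (x - R • y)]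
    have hA0 : (0:ℝ) < A := lt_of_lt_of_le one_pos hA1
    have hB0 : (0:ℝ) < B := lt_of_lt_of_le one_pos hB1
    have hw₀ : w (l⁻¹ • (x - R • y₀)) ≤ A₅ * A ^ (-b) := by
      refine le_trans (hw _).2 ?_
      apply mul_le_mul_of_nonneg_left _ hA₅.le
      apply rpow_neg_anti' hA0 _ hb0.le
      rw [norm_smul]
      have hinv : 1 ≤ l⁻¹ := (one_le_inv_iff₀).mpr ⟨hl0', hl1⟩
      have h1 : ‖x - R • y₀‖ ≤ ‖l⁻¹‖ * ‖x - R • y₀‖ := by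
        apply le_mul_of_one_le_left (norm_nonneg _)
        rw [Real.norm_eq_abs, abs_of_pos (by positivity)]; exact hinv
      simp only [hAdef]; linarith
    have hwy : w ((1 - l)⁻¹ • (x - R • y)) ≤ A₅ * B ^ (-b) := by
      refine le_trans (hw _).2 ?_
      apply mul_le_mul_of_nonneg_left _ hA₅.le
      apply rpow_neg_anti' hB0 _ hb0.le
      rw [norm_smul]
      have h1l : (0:ℝ) < 1 - l := by linarith
      have hinv : 1 ≤ (1 - l)⁻¹ := (one_le_inv_iff₀).mpr ⟨h1l, by linarith⟩
      have h1 : ‖x - R • y‖ ≤ ‖(1 - l)⁻¹‖ * ‖x - R • y‖ := by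
        apply le_mul_of_one_le_left (norm_nonneg _)
        rw [Real.norm_eq_abs, abs_of_pos (by positivity)]; exact hinv
      simp only [hBdef]; linarith
    have hw₀0 : 0 ≤ w (l⁻¹ • (x - R • y₀)) := (hw _).1
    have hwy0 : 0 ≤ w ((1 - l)⁻¹ • (x - R • y)) := (hw _).1
    have hfb : |f (w (l⁻¹ • (x - R • y₀)))| ≤ A₂ * A₅ ^ (p - 1) * A ^ (-a) := by
      refine le_trans (hf _) ?_
      rw [abs_of_nonneg hw₀0, mul_assoc]
      apply mul_le_mul_of_nonneg_left _ hA₂.le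
      have h1 : (w (l⁻¹ • (x - R • y₀))) ^ (p - 1) ≤ (A₅ * A ^ (-b)) ^ (p - 1) :=
        Real.rpow_le_rpow hw₀0 hw₀ hp1pos.le
      refine le_trans h1 ?_
      have he : (-b) * (p - 1) = -a := by
        rw [hp1]; field_simp
      rw [Real.mul_rpow hA₅.le (rpow_nonneg hA0.le _), ← Real.rpow_mul hA0.le, he]
    have hwyb : |w ((1 - l)⁻¹ • (x - R • y))| ≤ A₅ * B ^ (-b) := by
      rw [abs_of_nonneg hwy0]; exact hwy
    have hsum : 2 + 2 * R ≤ A + B := by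
      have e1 : (x - R • y₀) - (x - R • y) = R • (y - y₀) := by
        rw [smul_sub]; abel
      have e2 : ‖R • (y - y₀)‖ = 2 * R := by
        rw [norm_smul, Real.norm_eq_abs, abs_of_pos hR0, hy]; ring
      have e3 : ‖R • (y - y₀)‖ ≤ ‖x - R • y₀‖ + ‖x - R • y‖ := by
        rw [← e1]; exact norm_sub_le _ _
      simp only [hAdef, hBdef]
      rw [e2] at e3; linarith
    have hks := key_split' hab hb0.le hA1 hB1 hR hsum
    calc |h x| = |f (w (l⁻¹ • (x - R • y₀)))| * |w ((1 - l)⁻¹ • (x - R • y))| := by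
          simp only [hhdef]; exact abs_mul _ _
      _ ≤ (A₂ * A₅ ^ (p - 1) * A ^ (-a)) * (A₅ * B ^ (-b)) := by
          apply mul_le_mul hfb hwyb (abs_nonneg _)
          positivity
      _ = K * (A ^ (-a) * B ^ (-b)) := by rw [hKdef]; ring
      _ ≤ K * (R ^ (-b) * (A ^ (-a) + B ^ (-a))) :=
          mul_le_mul_of_nonneg_left hks hK0.le
      _ = g x := by simp only [hgdef, hAdef, hBdef]
  calc (∫ x, h x) ≤ |∫ x, h x| := le_abs_self _
    _ ≤ ∫ x, |h x| := by
        simpa [Real.norm_eq_abs] using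
          norm_integral_le_integral_norm (μ := (volume : Measure (EuclideanSpace ℝ (Fin N)))) h
    _ ≤ ∫ x, g x := integral_mono_of_nonneg (Filter.Eventually.of_forall fun x => abs_nonneg _)
          hg_int (Filter.Eventually.of_forall hbound)
    _ = K * (R ^ (-b) * (C₁ + C₁)) := by
        simp only [hgdef]
        rw [integral_const_mul, integral_const_mul,
          integral_add (hint.comp_sub_right (R • y₀)) (hint.comp_sub_right (R • y)),
          integral_sub_right_eq_self (fun z : EuclideanSpace ℝ (Fin N) => (1 + ‖z‖) ^ (-a)) (R • y₀),
          integral_sub_right_eq_self (fun z : EuclideanSpace ℝ (Fin N) => (1 + ‖z‖) ^ (-a)) (R • y)]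
    _ ≤ (2 * K * C₁ + 1) * R ^ (-b) := by nlinarith
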